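/- For every k ≥ 0 and every integer i with 0 < i < S(k) and i ≠ S(k−1), one has |c_i| > |c_{S(k−1)}|. (That is, among the first S(k) − 1 iterates of the turning point 0, the closest return to 0 occurs exactly at the Fibonacci time S(k−1).) -/

import Mathlib

open MeasureTheory Filter Set

theorem same_sign_abs_sub' (a b : ℝ) (h : 0 < a ↔ 0 < b) (ha : a ≠ 0) (hb : b ≠ 0) :
    |a - b| = abs (|a| - |b|) := by
  rcases ha.lt_or_gt with h1 | h1 <;> rcases hb.lt_or_gt with h2 | h2
  · rw [abs_of_neg h1, abs_of_neg h2, abs_sub_comm]; ring_nf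
  · exact absurd (h.mpr h2) h1.not_gt
  · exact absurd (h.mp h1) h2.not_gt
  · rw [abs_of_pos h1, abs_of_pos h2]

theorem opp_sign_abs_sub' (a b : ℝ) (h : 0 < a ↔ b < 0) (ha : a ≠ 0) (hb : b ≠ 0) :
    |a - b| = |a| + |b| := by
  rcases ha.lt_or_gt with h1 | h1 <;> rcases hb.lt_or_gt with h2 | h2
  · have : ¬ (0 < a) := h1.not_gt
    rw [h] at this; exact absurd h2 (by simpa using this)
  · rw [abs_of_neg h1, abs_of_pos h2, abs_sub_comm, abs_of_pos (by linarith)]; ring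
  · rw [abs_of_pos h1, abs_of_neg h2, abs_of_pos (by linarith)]; ring
  · exact absurd (h.mp h1) h2.not_gt

set_option maxHeartbeats 2000000 in
theorem closest_returns_at_fibonacci_times
    (lam : ℝ) (hlam1 : 1 < lam) (hlam2 : lam ≤ 2)
    (T : ℝ → ℝ) (hT : ∀ x : ℝ, T x = lam * (1 - |x|) - 1)
    (c : ℕ → ℝ) (hc : ∀ i : ℕ, c i = T^[i] 0)
    (S : ℤ → ℕ) (hSm2 : S (-2) = 0) (hSm1 : S (-1) = 1)
    (hSrec : ∀ k : ℤ, 0 ≤ k → S k = S (k - 1) + S (k - 2))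
    (hcne : ∀ j : ℕ, 1 ≤ j → c j ≠ 0)
    (hc2neg : c 2 < 0) (hc1pos : 0 < c 1)
    (hsame : ∀ k : ℤ, 2 ≤ k → ∀ j : ℕ, 1 ≤ j → j < S (k - 2) →
      (0 < c (S (k - 1) + j) ↔ 0 < c j))
    (hopp : ∀ k : ℤ, 2 ≤ k → (0 < c (S k) ↔ c (S (k - 2)) < 0))
    (hdec : ∀ k : ℤ, 0 ≤ k → |c (S (k + 1))| < |c (S k)|)
    (hc34 : |c 3| < |c 4|) :
    ∀ k : ℤ, 0 ≤ k → ∀ i : ℕ, 0 < i → i < S k → i ≠ S (k - 1) →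
      |c (S (k - 1))| < |c i| := by
  have hlam0 : (0:ℝ) < lam := by linarith
  -- basic S values
  have hS0 : S 0 = 1 := by have := hSrec 0 (by norm_num); simpa [hSm1, hSm2] using this
  have hS1 : S 1 = 2 := by
    have := hSrec 1 (by norm_num); norm_num at this; rw [this, hS0, hSm1]
  have hS2 : S 2 = 3 := by
    have := hSrec 2 (by norm_num); norm_num at this; rw [this, hS0, hS1]
  have hS3 : S 3 = 5 := by
    have := hSrec 3 (by norm_num); norm_num at this
    rw [this, hS1, hS2]
  -- positivity of S
  have hSpos : ∀ k : ℤ, -1 ≤ k → 1 ≤ S k := by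
    refine Int.le_induction (motive := fun k _ => 1 ≤ S k) ?_ ?_
    · omega
    · intro n hn ih
      have h1 := hSrec (n+1) (by omega)
      have h2 : (n+1) - 1 = n := by ring
      rw [h2] at h1
      omega
  -- monotonicity of S
  have hSmono : ∀ a : ℤ, -1 ≤ a → ∀ b : ℤ, a ≤ b → S a ≤ S b := by
    intro a ha
    refine Int.le_induction (motive := fun b _ => S a ≤ S b) le_rfl ?_
    intro n hn ih
    have h1 := hSrec (n+1) (by omega)
    have h2 : (n+1) - 1 = n := by ring
    rw [h2] at h1
    omega
  -- iteration formula
  have cS : ∀ n : ℕ, c (n+1) = lam * (1 - |c n|) - 1 := by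
    intro n
    rw [hc (n+1), Function.iterate_succ_apply', ← hc n, hT]
  have c0 : c 0 = 0 := by rw [hc 0]; rfl
  have hc1e : c 1 = lam - 1 := by
    have := cS 0; rw [c0] at this; simpa using this
  -- d positivity
  have dpos : ∀ k : ℤ, -1 ≤ k → 0 < |c (S k)| :=
    fun k hk => abs_pos.2 (hcne _ (hSpos k hk))
  -- d monotone decreasing
  have dmono : ∀ a : ℤ, 0 ≤ a → ∀ b : ℤ, a ≤ b → |c (S b)| ≤ |c (S a)| := by
    intro a ha
    refine Int.le_induction (motive := fun b _ => |c (S b)| ≤ |c (S a)|) le_rfl ?_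
    intro n hn ih
    exact le_trans (hdec n (by omega)).le ih
  have dstrict : ∀ a : ℤ, 0 ≤ a → ∀ b : ℤ, a < b → |c (S b)| < |c (S a)| := by
    intro a ha b hb
    exact lt_of_le_of_lt (dmono (a+1) (by omega) b (by omega)) (hdec a ha)
  -- explicit small values and lambda bound
  have habs1 : |c 1| = lam - 1 := by rw [hc1e, abs_of_pos (by rw [← hc1e]; exact hc1pos)]
  have hc2e : c 2 = lam * (1 - (lam - 1)) - 1 := by
    have := cS 1; rw [habs1] at this; exact this
  have hc3neg : c 3 < 0 := by
    have h := hopp 2 (by norm_num)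
    norm_num [hS2, hS0] at h
    rcases (hcne 3 (by norm_num)).lt_or_gt with h3 | h3
    · exact h3
    · exact absurd (h.mp h3) hc1pos.asymm
  have hc3e : c 3 = lam * (1 + c 2) - 1 := by
    have := cS 2; rw [abs_of_neg hc2neg] at this; rw [this]; ring
  have hc4pos : 0 < c 4 := by
    have h := hsame 3 (by norm_num) 1 le_rfl (by rw [show (3:ℤ)-2 = 1 by ring, hS1]; norm_num)
    rw [show (3:ℤ)-1 = 2 by ring, hS2] at h
    norm_num at h
    exact h.mpr hc1pos
  have hc4e : c 4 = lam * (1 + c 3) - 1 := by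
    have := cS 3; rw [abs_of_neg hc3neg] at this; rw [this]; ring
  have hc5pos : 0 < c 5 := by
    have h := hopp 3 (by norm_num)
    rw [show (3:ℤ)-2 = 1 by ring, hS3, hS1] at h
    exact h.mpr hc2neg
  have hc5e : c 5 = lam * (1 - c 4) - 1 := by
    have := cS 4; rw [abs_of_pos hc4pos] at this; exact this
  have hc5poly : c 5 = lam^5 - 2*lam^4 + 2*lam - 1 := by
    rw [hc5e, hc4e, hc3e, hc2e]; ring
  have hlam17 : (1.7 : ℝ) < lam := by
    rw [hc5poly] at hc5pos
    nlinarith [sq_nonneg (lam - 1.7), sq_nonneg (lam - 1), sq_nonneg lam,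
      mul_pos hlam0 hlam0, sq_nonneg (lam*lam - 2*lam)]
  have I1 : 4*(lam+1) < lam^5 := by nlinarith [sq_nonneg (lam - 1.7), sq_nonneg lam]
  have I3 : 2*lam^3 + 4*lam + 4 < lam^6 := by
    nlinarith [sq_nonneg (lam - 1.7), sq_nonneg lam, sq_nonneg (lam^2 - 2.89)]
  have I2 : 2*lam^3 + 4 < lam^6 := by nlinarith
  -- shadowing lemma
  have SH : ∀ k : ℤ, 2 ≤ k → ∀ j : ℕ, 1 ≤ j → j ≤ S (k-2) →
      |c (S (k-1) + j) - c j| = lam^j * |c (S (k-1))| := by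
    intro k hk j hj1
    induction j, hj1 using Nat.le_induction with
    | base =>
      intro _
      have h1 : c (S (k-1) + 1) = lam * (1 - |c (S (k-1))|) - 1 := cS _
      have h2 : c 1 = lam - 1 := hc1e
      have h3 : c (S (k-1) + 1) - c 1 = -(lam * |c (S (k-1))|) := by
        rw [h1, h2]; ring
      rw [h3, abs_neg, abs_of_nonneg (by positivity), pow_one]
    | succ j hj ih =>
      intro hjS
      have hjlt : j < S (k-2) := by omega
      have ihe := ih (by omega)
      have hsgn := hsame k hk j hj hjlt
      have hne1 : c (S (k-1) + j) ≠ 0 := hcne _ (by have := hSpos (k-1) (by omega); omega)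
      have hne2 : c j ≠ 0 := hcne _ hj
      have h1 : c (S (k-1) + (j+1)) = lam * (1 - |c (S (k-1) + j)|) - 1 := by
        have := cS (S (k-1) + j); rw [Nat.add_assoc] at this; exact this
      have h2 : c (j+1) = lam * (1 - |c j|) - 1 := cS j
      have h3 : c (S (k-1) + (j+1)) - c (j+1) = lam * (|c j| - |c (S (k-1) + j)|) := by
        rw [h1, h2]; ring
      rw [h3, abs_mul, abs_of_pos hlam0, abs_sub_comm,
        ← same_sign_abs_sub' _ _ hsgn hne1 hne2, ihe]
      ring
  -- the fundamental recursion R_k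
  have Rk : ∀ k : ℤ, 2 ≤ k →
      |c (S k)| + |c (S (k-2))| = lam ^ (S (k-2)) * |c (S (k-1))| := by
    intro k hk
    have hj1 : 1 ≤ S (k-2) := hSpos (k-2) (by omega)
    have h1 := SH k hk (S (k-2)) hj1 le_rfl
    have h2 : S (k-1) + S (k-2) = S k := (hSrec k (by omega)).symm
    rw [h2] at h1
    have hne1 : c (S k) ≠ 0 := hcne _ (hSpos k (by omega))
    have hne2 : c (S (k-2)) ≠ 0 := hcne _ hj1
    rw [← opp_sign_abs_sub' _ _ (hopp k hk) hne1 hne2, h1]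
  -- E1 : lam^(S (k-1)) * d k < 2 * d (k-1)
  have E1 : ∀ k : ℤ, 1 ≤ k → lam ^ (S (k-1)) * |c (S k)| < 2 * |c (S (k-1))| := by
    intro k hk
    have h1 := Rk (k+1) (by omega)
    rw [show (k+1) - 2 = k - 1 by ring, show (k+1) - 1 = k by ring] at h1
    have h2 : |c (S (k+1))| < |c (S (k-1))| := dstrict (k-1) (by omega) (k+1) (by omega)
    linarith
  -- existence of the Fibonacci scale of j
  have exists_m : ∀ N : ℕ, ∀ j : ℕ, 1 ≤ j → j < S (N:ℤ) →
      ∃ m : ℕ, 1 ≤ m ∧ m ≤ N ∧ S ((m:ℤ)-1) ≤ j ∧ j < S (m:ℤ) := by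
    intro N
    induction N with
    | zero => intro j hj1 hj2; rw [show ((0:ℕ):ℤ) = 0 from rfl, hS0] at hj2; omega
    | succ N ih =>
      intro j hj1 hj2
      by_cases hcase : j < S (N:ℤ)
      · obtain ⟨m, hm1, hm2, hm3, hm4⟩ := ih j hj1 hcase
        exact ⟨m, hm1, by omega, hm3, hm4⟩
      · refine ⟨N+1, by omega, le_rfl, ?_, ?_⟩
        · rw [show ((N+1:ℕ):ℤ) - 1 = (N:ℤ) by push_cast; ring]; omega
        · rw [show ((N+1:ℕ):ℤ) = (N:ℤ)+1 by push_cast; ring] at hj2; exact hj2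
  -- main statement by strong induction
  have M : ∀ n : ℕ, ∀ i : ℕ, 0 < i → i < S (n:ℤ) → i ≠ S ((n:ℤ)-1) →
      |c (S ((n:ℤ)-1))| < |c i| := by
    intro n
    induction n using Nat.strong_induction_on with
    | _ n IH =>
    intro i hi0 hiS hine
    rcases n with _ | _ | _ | n
    · rw [show ((0:ℕ):ℤ) = 0 from rfl, hS0] at hiS; omega
    · rw [show ((1:ℕ):ℤ) = 1 from rfl, hS1] at hiS
      rw [show ((1:ℕ):ℤ) - 1 = 0 by ring, hS0] at hine
      omega
    · rw [show ((2:ℕ):ℤ) = 2 from rfl, hS2] at hiS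
      rw [show ((2:ℕ):ℤ) - 1 = 1 by ring] at hine ⊢
      have hi1 : i = 1 := by
        have := hS1; omega
      subst hi1
      have h := hdec 0 le_rfl
      rw [show (0:ℤ)+1 = 1 by ring, hS0] at h
      exact h
    · -- n + 3 case
      have hcast : ((n+3:ℕ):ℤ) = (n:ℤ)+3 := by push_cast; ring
      rw [hcast] at hiS hine ⊢
      rw [show ((n:ℤ)+3) - 1 = (n:ℤ)+2 by ring] at hine ⊢
      rcases lt_trichotomy i (S ((n:ℤ)+2)) with hlt | heq | hgt
      · -- i below S(k-1)
        by_cases hi2 : i = S ((n:ℤ)+1)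
        · rw [hi2]
          exact dstrict ((n:ℤ)+1) (by omega) ((n:ℤ)+2) (by omega)
        · have hc2 : ((n+2:ℕ):ℤ) = (n:ℤ)+2 := by push_cast; ring
          have hIH := IH (n+2) (by omega) i hi0 (by rw [hc2]; exact hlt)
            (by rw [hc2, show ((n:ℤ)+2)-1 = (n:ℤ)+1 by ring]; exact hi2)
          rw [hc2, show ((n:ℤ)+2)-1 = (n:ℤ)+1 by ring] at hIH
          exact lt_trans (dstrict ((n:ℤ)+1) (by omega) ((n:ℤ)+2) (by omega)) hIH
      · exact absurd heq hine
      · -- i above S(k-1)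
        set j := i - S ((n:ℤ)+2) with hjdef
        have hj1 : 1 ≤ j := by omega
        have hieq : i = S ((n:ℤ)+2) + j := by omega
        have hjlt : j < S ((n:ℤ)+1) := by
          have hr := hSrec ((n:ℤ)+3) (by omega)
          rw [show ((n:ℤ)+3)-1 = (n:ℤ)+2 by ring, show ((n:ℤ)+3)-2 = (n:ℤ)+1 by ring] at hr
          omega
        have hSHn := SH ((n:ℤ)+3) (by omega) j hj1
          (by rw [show ((n:ℤ)+3)-2 = (n:ℤ)+1 by ring]; omega)
        rw [show ((n:ℤ)+3)-1 = (n:ℤ)+2 by ring] at hSHn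
        have htri : |c j| - lam^j * |c (S ((n:ℤ)+2))| ≤ |c (S ((n:ℤ)+2) + j)| := by
          have h := abs_sub_abs_le_abs_sub (c j) (c (S ((n:ℤ)+2) + j))
          rw [abs_sub_comm] at h
          linarith [hSHn.le, h]
        rw [hieq]
        rcases Nat.eq_zero_or_pos n with hn0 | hn1
        · -- n = 0, k = 3 : j = 1, use hc34
          subst hn0
          have hj2 : j = 1 := by
            rw [show ((0:ℕ):ℤ)+1 = 1 by norm_num, hS1] at hjlt; omega
          rw [show ((0:ℕ):ℤ)+2 = 2 by norm_num, hS2, hj2]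
          exact hc34
        · -- n ≥ 1, k = n+3 ≥ 4
          have hc1' : ((n+1:ℕ):ℤ) = (n:ℤ)+1 := by push_cast; ring
          obtain ⟨m, hm1, hm2, hm3, hm4⟩ := exists_m (n+1) j hj1 (by rw [hc1']; exact hjlt)
          have hDm : |c (S ((m:ℤ)-1))| ≤ |c j| := by
            by_cases hjm : j = S ((m:ℤ)-1)
            · rw [hjm]
            · exact (IH m (by omega) j (by omega) hm4 hjm).le
          have hSm1' : 1 ≤ S (m:ℤ) := hSpos (m:ℤ) (by omega)
          have hexp : lam^j * |c (S ((n:ℤ)+2))| ≤ lam^(S (m:ℤ) - 1) * |c (S ((n:ℤ)+2))| :=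
            mul_le_mul_of_nonneg_right (pow_le_pow_right₀ hlam1.le (by omega)) (abs_nonneg _)
          have hD0 : 0 < |c (S ((n:ℤ)+2))| := dpos _ (by omega)
          suffices key : lam^(S (m:ℤ) - 1) * |c (S ((n:ℤ)+2))| + |c (S ((n:ℤ)+2))|
              < |c (S ((m:ℤ)-1))| by
            calc |c (S ((n:ℤ)+2))|
                < |c (S ((m:ℤ)-1))| - lam^(S (m:ℤ)-1) * |c (S ((n:ℤ)+2))| := by linarith
              _ ≤ |c (S ((m:ℤ)-1))| - lam^j * |c (S ((n:ℤ)+2))| := by linarith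
              _ ≤ |c j| - lam^j * |c (S ((n:ℤ)+2))| := by linarith
              _ ≤ |c (S ((n:ℤ)+2) + j)| := htri
          by_cases hm1' : m = 1
          · -- case (a) : m = 1
            have hm1z : (m:ℤ) = 1 := by rw [hm1']; norm_num
            rw [hm1z, hS1, show (1:ℤ)-1 = 0 by norm_num, show (2-1 : ℕ) = 1 from rfl, pow_one,
              hS0]
            -- need : lam * D + D < |c 1|
            have hE3 := E1 3 (by norm_num)
            rw [show (3:ℤ)-1 = 2 by norm_num, hS2, hS3] at hE3
            have hE2 := E1 2 (by norm_num)
            rw [show (2:ℤ)-1 = 1 by norm_num, hS1, hS2] at hE2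
            have hd10 : |c 2| < |c 1| := by
              have h := hdec 0 le_rfl
              rw [show (0:ℤ)+1 = 1 by norm_num, hS1, hS0] at h; exact h
            have hDd3 : |c (S ((n:ℤ)+2))| ≤ |c 5| := by
              have h := dmono 3 (by norm_num) ((n:ℤ)+2) (by omega)
              rw [hS3] at h; exact h
            have hd0p : 0 < |c 1| := abs_pos.2 (hcne 1 le_rfl)
            have hstep1 : lam^3 * |c (S ((n:ℤ)+2))| < 2 * |c 3| := by
              have := mul_le_mul_of_nonneg_left hDd3 (pow_pos hlam0 3).le
              linarith
            have hstep2 : lam^5 * |c (S ((n:ℤ)+2))| < 4 * |c 2| := by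
              have e : lam^5 * |c (S ((n:ℤ)+2))| = lam^2 * (lam^3 * |c (S ((n:ℤ)+2))|) := by ring
              have t1 := mul_lt_mul_of_pos_left hstep1 (pow_pos hlam0 2)
              have t2 := mul_lt_mul_of_pos_left hE2 two_pos
              linarith
            have hstep3 : lam^5 * |c (S ((n:ℤ)+2))| < 4 * |c 1| := by linarith
            have t5 := mul_lt_mul_of_pos_left hstep3 (show (0:ℝ) < lam+1 by linarith)
            have t6 := mul_lt_mul_of_pos_right I1 hd0p
            have t7 : lam^5 * ((lam+1) * |c (S ((n:ℤ)+2))|) < lam^5 * |c 1| := by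
              linarith
            have t8 := lt_of_mul_lt_mul_left t7 (pow_pos hlam0 5).le
            linarith
          · have hm2' : 2 ≤ m := by omega
            have hSm3 : 3 ≤ S (m:ℤ) := by
              have := hSmono 2 (by norm_num) (m:ℤ) (by exact_mod_cast hm2'); omega
            by_cases hmtop : (m:ℤ) = (n:ℤ)+1
            · -- case (c) : m = n+1
              rw [hmtop, show ((n:ℤ)+1)-1 = (n:ℤ) by ring]
              rw [hmtop] at hSm3
              set X := lam^(S ((n:ℤ)+1) - 1) * |c (S ((n:ℤ)+2))| with hXdef
              set Y := |c (S ((n:ℤ)+2))| with hYdef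
              set B := |c (S ((n:ℤ)+1))| with hBdef
              set C := |c (S (n:ℤ))| with hCdef
              have hY0 : 0 < Y := hD0
              have hB0 : 0 < B := dpos _ (by omega)
              have hC0 : 0 < C := dpos _ (by omega)
              have hX0 : 0 ≤ X := by positivity
              have hpowe : lam^(S ((n:ℤ)+1)) = lam^(S ((n:ℤ)+1) - 1) * lam := by
                rw [← pow_succ]; congr 1; omega
              have hR := Rk ((n:ℤ)+3) (by omega)
              rw [show ((n:ℤ)+3)-2 = (n:ℤ)+1 by ring, show ((n:ℤ)+3)-1 = (n:ℤ)+2 by ring] at hR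
              have hd31 : |c (S ((n:ℤ)+3))| < B := dstrict ((n:ℤ)+1) (by omega) _ (by omega)
              have hd32 : |c (S ((n:ℤ)+3))| < Y := dstrict ((n:ℤ)+2) (by omega) _ (by omega)
              have f1 : lam * X < Y + B := by
                have e : lam * X = lam^(S ((n:ℤ)+1)) * Y := by rw [hpowe, hXdef]; ring
                rw [e, ← hR]; linarith
              have f2 : lam^3 * Y < 2 * B := by
                have hle : lam^3 ≤ lam^(S ((n:ℤ)+1)) := pow_le_pow_right₀ hlam1.le hSm3
                have t := mul_le_mul_of_nonneg_right hle hY0.le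
                linarith
              have f3 : lam^2 * B < 2 * C := by
                have hE := E1 ((n:ℤ)+1) (by omega)
                rw [show ((n:ℤ)+1)-1 = (n:ℤ) by ring] at hE
                have hSn2 : 2 ≤ S (n:ℤ) := by
                  have := hSmono 1 (by norm_num) (n:ℤ) (by omega); omega
                have hle : lam^2 ≤ lam^(S (n:ℤ)) := pow_le_pow_right₀ hlam1.le hSn2
                have t := mul_le_mul_of_nonneg_right hle hB0.le
                linarith
              have goal6 : lam^6 * (X + Y) < lam^6 * C := by
                have t1 : lam^5 * (lam * X) < lam^5 * (Y + B) :=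
                  mul_lt_mul_of_pos_left f1 (pow_pos hlam0 5)
                have t2 : lam^2 * (lam^3 * Y) < lam^2 * (2*B) :=
                  mul_lt_mul_of_pos_left f2 (pow_pos hlam0 2)
                have t3 : lam^3 * (lam^3 * Y) < lam^3 * (2*B) :=
                  mul_lt_mul_of_pos_left f2 (pow_pos hlam0 3)
                have t4 : (lam^3 + 2*lam + 2) * (lam^2 * B) < (lam^3 + 2*lam + 2) * (2*C) :=
                  mul_lt_mul_of_pos_left f3 (by nlinarith)
                have t5 := mul_lt_mul_of_pos_right I3 hC0
                have e : lam^6 * (X + Y) = lam^5 * (lam * X) + lam^3 * (lam^3 * Y) := by ring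
                linarith
              exact lt_of_mul_lt_mul_left goal6 (by positivity)
            · -- case (b) : 2 ≤ m ≤ n
              have hmn : (m:ℤ) ≤ (n:ℤ) := by
                have h1 : (m:ℤ) ≤ (n:ℤ)+1 := by exact_mod_cast (by omega : m ≤ n+1)
                omega
              set X := lam^(S (m:ℤ) - 1) * |c (S ((n:ℤ)+2))| with hXdef
              set Y := |c (S ((n:ℤ)+2))| with hYdef
              set C := |c (S ((m:ℤ)-1))| with hCdef
              have hY0 : 0 < Y := hD0
              have hC0 : 0 < C := dpos _ (by omega)
              have hX0 : 0 ≤ X := by positivity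
              have hSm5 : 5 ≤ S ((m:ℤ)+1) := by
                have := hSmono 3 (by norm_num) ((m:ℤ)+1) (by omega); omega
              have hEm2 := E1 ((m:ℤ)+2) (by omega)
              rw [show ((m:ℤ)+2)-1 = (m:ℤ)+1 by ring] at hEm2
              have hEm1 := E1 ((m:ℤ)+1) (by omega)
              rw [show ((m:ℤ)+1)-1 = (m:ℤ) by ring] at hEm1
              have hDle : Y ≤ |c (S ((m:ℤ)+2))| := dmono ((m:ℤ)+2) (by omega) _ (by omega)
              have hYle : Y ≤ |c (S ((m:ℤ)+1))| := dmono ((m:ℤ)+1) (by omega) _ (by omega)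
              have hdmC : |c (S (m:ℤ))| ≤ C := dmono ((m:ℤ)-1) (by omega) _ (by omega)
              have hdm1p : 0 < |c (S ((m:ℤ)+1))| := dpos _ (by omega)
              have hA0 : lam^(S ((m:ℤ)+1)) * Y < 2 * |c (S ((m:ℤ)+1))| := by
                have t := mul_le_mul_of_nonneg_left hDle (pow_pos hlam0 (S ((m:ℤ)+1))).le
                linarith
              have hA1 : lam^(S ((m:ℤ)+1)) * (lam^(S (m:ℤ)) * Y) < 4 * C := by
                have t1 := mul_lt_mul_of_pos_left hA0 (pow_pos hlam0 (S (m:ℤ)))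
                have t2 := mul_lt_mul_of_pos_left hEm1 two_pos
                have e : lam^(S ((m:ℤ)+1)) * (lam^(S (m:ℤ)) * Y)
                    = lam^(S (m:ℤ)) * (lam^(S ((m:ℤ)+1)) * Y) := by ring
                linarith
              have hexpe : lam^(S ((m:ℤ)+1)+1) * X = lam^(S ((m:ℤ)+1)) * (lam^(S (m:ℤ)) * Y) := by
                rw [hXdef, ← mul_assoc, ← mul_assoc, ← pow_add, ← pow_add]
                congr 2
                omega
              have hA2 : lam^6 * X < 4 * C := by
                have hh : lam^(S ((m:ℤ)+1)+1) * X < 4 * C := by rw [hexpe]; exact hA1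
                have hle : lam^6 ≤ lam^(S ((m:ℤ)+1)+1) := pow_le_pow_right₀ hlam1.le (by omega)
                have t := mul_le_mul_of_nonneg_right hle hX0
                linarith
              have hA3 : lam^3 * Y < 2 * C := by
                have hle : lam^3 ≤ lam^(S (m:ℤ)) := pow_le_pow_right₀ hlam1.le hSm3
                have t1 := mul_le_mul_of_nonneg_right hle hY0.le
                have t2 := mul_le_mul_of_nonneg_left hYle (pow_pos hlam0 (S (m:ℤ))).le
                linarith
              have goal6 : lam^6 * (X + Y) < lam^6 * C := by
                have t3 : lam^3 * (lam^3 * Y) < lam^3 * (2*C) :=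
                  mul_lt_mul_of_pos_left hA3 (pow_pos hlam0 3)
                have t5 := mul_lt_mul_of_pos_right I2 hC0
                have e : lam^6 * (X + Y) = lam^6 * X + lam^3 * (lam^3 * Y) := by ring
                linarith
              exact lt_of_mul_lt_mul_left goal6 (by positivity)
  -- conclude
  intro k hk i hi0 hiS hine
  obtain ⟨n, rfl⟩ := Int.eq_ofNat_of_zero_le hk
  exact M n i hi0 hiS hine
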